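/- arXiv:1602.07943 — 2 statements merged into one kernel-verified Lean document; each statement's English description precedes it below -/
import Mathlib

section
/- Let X_1,...,X_L, Y_1,...,Y_L be i.i.d. rate-1 exponential random variables, S_l = min{X_l,Y_l}, l_0 = argmax_l S_l, Z_1 = X_{l_0}, Z_2 = Y_{l_0}, U = min{Z_1,Z_2}, V = max{Z_1,Z_2}. Then the joint density of (U,V) is f_{U,V}(u,v) = 2L e^{-(u+v)}(1 - e^{-2u})^{L-1} for 0 ≤ u ≤ v and 0 otherwise. -/
open MeasureTheory ProbabilityTheory Real Filter Topology

open scoped ENNReal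

lemma myExp_eq_withDensity : expMeasure 1 = volume.withDensity (exponentialPDF 1) := rfl

lemma myExp_singleton (x : ℝ) : expMeasure 1 {x} = 0 :=
  withDensity_absolutelyContinuous _ _ (Real.volume_singleton)

lemma myExp_Iic (t : ℝ) :
    expMeasure 1 (Set.Iic t) = ENNReal.ofReal (if 0 ≤ t then 1 - Real.exp (-t) else 0) := by
  rw [myExp_eq_withDensity, withDensity_apply _ measurableSet_Iic,
    lintegral_exponentialPDF_eq_antiDeriv one_pos]
  simp

lemma myExp_Iio (t : ℝ) :
    expMeasure 1 (Set.Iio t) = ENNReal.ofReal (if 0 ≤ t then 1 - Real.exp (-t) else 0) := by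
  rw [← myExp_Iic]
  refine le_antisymm (measure_mono Set.Iio_subset_Iic_self) ?_
  calc expMeasure 1 (Set.Iic t) ≤ expMeasure 1 (Set.Iio t ∪ {t}) := by
        refine measure_mono ?_
        intro x hx
        have hx' : x ≤ t := hx
        rcases hx'.lt_or_eq with h | h
        · exact Or.inl h
        · exact Or.inr h
    _ ≤ expMeasure 1 (Set.Iio t) + expMeasure 1 {t} := measure_union_le _ _
    _ = expMeasure 1 (Set.Iio t) := by rw [myExp_singleton, add_zero]

lemma myExp_Ici (t : ℝ) (ht : 0 ≤ t) :
    expMeasure 1 (Set.Ici t) = ENNReal.ofReal (Real.exp (-t)) := by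
  haveI : IsProbabilityMeasure (expMeasure 1) := isProbabilityMeasure_expMeasure one_pos
  have : Set.Ici t = (Set.Iio t)ᶜ := by simp
  have he : Real.exp (-t) ≤ 1 := Real.exp_le_one_iff.mpr (by linarith)
  rw [this, prob_compl_eq_one_sub measurableSet_Iio, myExp_Iio, if_pos ht,
    ← ENNReal.ofReal_one, ← ENNReal.ofReal_sub _ (by linarith : (0:ℝ) ≤ 1 - Real.exp (-t))]
  norm_num

open Finset in
lemma myPairs_iIndep {Ω : Type*} [MeasurableSpace Ω] {μ : Measure Ω} [IsProbabilityMeasure μ]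
    {n : ℕ} {X Y : Fin n → Ω → ℝ}
    (hX : ∀ l, Measurable (X l)) (hY : ∀ l, Measurable (Y l))
    (hindep : iIndepFun (Sum.elim X Y) μ) :
    iIndepFun (fun k ω => (X k ω, Y k ω)) μ := by
  classical
  have hmeas : ∀ i, Measurable (Sum.elim X Y i) := by
    rintro (i | i)
    · exact hX i
    · exact hY i
  rw [iIndepFun_iff_measure_inter_preimage_eq_mul]
  intro K sets hsets
  induction K using Finset.induction_on with
  | empty => simp
  | @insert a K ha ih =>
    have hK : ∀ i ∈ K, MeasurableSet (sets i) := fun i hi => hsets i (mem_insert_of_mem hi)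
    have hsetsa : MeasurableSet (sets a) := hsets a (mem_insert_self a K)
    -- index sets
    set T : Finset (Fin n ⊕ Fin n) := K.image Sum.inl ∪ K.image Sum.inr with hT
    have hmemT₁ : ∀ k ∈ K, (Sum.inl k : Fin n ⊕ Fin n) ∈ T := by
      intro k hk; simp [hT, hk]
    have hmemT₂ : ∀ k ∈ K, (Sum.inr k : Fin n ⊕ Fin n) ∈ T := by
      intro k hk; simp [hT, hk]
    have hdisj : Disjoint ({Sum.inl a, Sum.inr a} : Finset (Fin n ⊕ Fin n)) T := by
      rw [Finset.disjoint_left]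
      rintro x hx hxT
      simp only [hT, Finset.mem_union, Finset.mem_image] at hxT
      simp only [Finset.mem_insert, Finset.mem_singleton] at hx
      rcases hx with rfl | rfl <;> rcases hxT with ⟨k, hk, hke⟩ | ⟨k, hk, hke⟩ <;>
        (try cases hke) <;> exact ha hk
    have h1 := hindep.indepFun_finset {Sum.inl a, Sum.inr a} T hdisj hmeas
    -- compose
    set φ : (∀ _ : ({Sum.inl a, Sum.inr a} : Finset (Fin n ⊕ Fin n)), ℝ) → ℝ × ℝ :=
      fun v => (v ⟨Sum.inl a, by simp⟩, v ⟨Sum.inr a, by simp⟩) with hφ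
    have hφm : Measurable φ := (measurable_pi_apply _).prodMk (measurable_pi_apply _)
    have h2 : IndepFun (fun ω => (X a ω, Y a ω)) (fun ω (i : T) => Sum.elim X Y i ω) μ :=
      h1.comp hφm measurable_id
    -- the big set
    set M : Set (∀ _ : T, ℝ) :=
      ⋂ (k : {k // k ∈ K}), (fun v : (∀ _ : T, ℝ) =>
        ((v ⟨Sum.inl k.1, hmemT₁ k.1 k.2⟩, v ⟨Sum.inr k.1, hmemT₂ k.1 k.2⟩) : ℝ × ℝ)) ⁻¹'
          sets k.1 with hM
    have hMmeas : MeasurableSet M := by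
      refine MeasurableSet.iInter fun k => ?_
      exact ((measurable_pi_apply _).prodMk (measurable_pi_apply _)) (hK k.1 k.2)
    have hMpre : (fun ω (i : T) => Sum.elim X Y i ω) ⁻¹' M
        = ⋂ i ∈ K, (fun ω => (X i ω, Y i ω)) ⁻¹' sets i := by
      ext ω
      simp only [hM, Set.mem_preimage, Set.mem_iInter]
      constructor
      · intro h i hi; exact h ⟨i, hi⟩
      · intro h k; exact h k.1 k.2
    have step := h2.measure_inter_preimage_eq_mul (sets a) M hsetsa hMmeas
    rw [Finset.set_biInter_insert, Finset.prod_insert ha, ← ih hK, ← hMpre, step]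

lemma myMin_cdf {Ω : Type*} [MeasurableSpace Ω] {μ : Measure Ω} [IsProbabilityMeasure μ]
    {A B : Ω → ℝ} (hA : Measurable A) (hB : Measurable B) (hAB : IndepFun A B μ)
    (hAl : μ.map A = expMeasure 1) (hBl : μ.map B = expMeasure 1) (t : ℝ) :
    μ {ω | min (A ω) (B ω) < t} = ENNReal.ofReal (1 - Real.exp (-(2*t))) := by
  by_cases ht : 0 ≤ t
  · have hE : {ω | min (A ω) (B ω) < t} = (A ⁻¹' Set.Ici t ∩ B ⁻¹' Set.Ici t)ᶜ := by
      ext ω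
      simp only [Set.mem_setOf_eq, Set.mem_compl_iff, Set.mem_inter_iff, Set.mem_preimage,
        Set.mem_Ici, not_and_or, not_le, min_lt_iff]
    have hmul := hAB.measure_inter_preimage_eq_mul (Set.Ici t) (Set.Ici t)
      measurableSet_Ici measurableSet_Ici
    have hAm : μ (A ⁻¹' Set.Ici t) = ENNReal.ofReal (Real.exp (-t)) := by
      rw [← Measure.map_apply hA measurableSet_Ici, hAl, myExp_Ici t ht]
    have hBm : μ (B ⁻¹' Set.Ici t) = ENNReal.ofReal (Real.exp (-t)) := by
      rw [← Measure.map_apply hB measurableSet_Ici, hBl, myExp_Ici t ht]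
    rw [hE, prob_compl_eq_one_sub ((hA measurableSet_Ici).inter (hB measurableSet_Ici)),
      hmul, hAm, hBm, ENNReal.ofReal_sub 1 (Real.exp_nonneg _), ENNReal.ofReal_one,
      ← ENNReal.ofReal_mul (Real.exp_nonneg _), ← Real.exp_add]
    ring_nf
  · push_neg at ht
    have hRHS : ENNReal.ofReal (1 - Real.exp (-(2*t))) = 0 := by
      rw [ENNReal.ofReal_eq_zero]
      have h1e : (1:ℝ) ≤ Real.exp (-(2*t)) := Real.one_le_exp (by linarith)
      linarith
    rw [hRHS, ← le_zero_iff]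
    have h1 : {ω | min (A ω) (B ω) < t} ⊆ A ⁻¹' Set.Iio t ∪ B ⁻¹' Set.Iio t := by
      intro ω hω
      have : min (A ω) (B ω) < t := hω
      rcases min_lt_iff.mp this with h | h
      · exact Or.inl h
      · exact Or.inr h
    calc μ {ω | min (A ω) (B ω) < t} ≤ μ (A ⁻¹' Set.Iio t) + μ (B ⁻¹' Set.Iio t) :=
          (measure_mono h1).trans (measure_union_le _ _)
      _ = 0 := by
        rw [← Measure.map_apply hA measurableSet_Iio, ← Measure.map_apply hB measurableSet_Iio,
          hAl, hBl, myExp_Iio, if_neg (not_le.mpr ht)]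
        simp

lemma myTie_null {Ω : Type*} [MeasurableSpace Ω] {μ : Measure Ω} [IsFiniteMeasure μ]
    {S1 S2 : Ω → ℝ} (hS1 : Measurable S1) (hS2 : Measurable S2) (h12 : IndepFun S1 S2 μ)
    (hatom : ∀ x : ℝ, μ (S2 ⁻¹' {x}) = 0) :
    μ {ω | S1 ω = S2 ω} = 0 := by
  have hD : MeasurableSet {p : ℝ × ℝ | p.1 = p.2} :=
    measurableSet_eq_fun measurable_fst measurable_snd
  have hpre : {ω | S1 ω = S2 ω} = (fun ω => (S1 ω, S2 ω)) ⁻¹' {p : ℝ × ℝ | p.1 = p.2} := rfl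
  rw [hpre, ← Measure.map_apply (hS1.prodMk hS2) hD,
    (indepFun_iff_map_prod_eq_prod_map_map hS1.aemeasurable hS2.aemeasurable).mp h12,
    Measure.prod_apply hD]
  have : ∀ x : ℝ, (μ.map S2) (Prod.mk x ⁻¹' {p : ℝ × ℝ | p.1 = p.2}) = 0 := by
    intro x
    have : (Prod.mk x ⁻¹' {p : ℝ × ℝ | p.1 = p.2}) = {x} := Set.ext fun y => eq_comm
    rw [this, Measure.map_apply hS2 (measurableSet_singleton x), hatom x]
  have h2 : ∀ x : ℝ, (μ.map S2) {x} = 0 := fun x => by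
    rw [Measure.map_apply hS2 (measurableSet_singleton x)]; exact hatom x
  have h3 : ∀ x : ℝ, (μ.map S2) (Prod.mk x ⁻¹' {p : ℝ × ℝ | p.1 = p.2}) = 0 := this
  simp only [h3]
  simp

lemma myDiag_null : ((volume : Measure ℝ).prod (volume : Measure ℝ)) {p : ℝ × ℝ | p.1 = p.2} = 0 := by
  rw [Measure.prod_apply (measurableSet_eq_fun measurable_fst measurable_snd)]
  have : ∀ x : ℝ, (volume : Measure ℝ) (Prod.mk x ⁻¹' {p : ℝ × ℝ | p.1 = p.2}) = 0 := by
    intro x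
    have : (Prod.mk x ⁻¹' {p : ℝ × ℝ | p.1 = p.2}) = {x} := Set.ext fun y => eq_comm
    rw [this, Real.volume_singleton]
  simp only [this]
  simp

lemma mySymm {H : ℝ × ℝ → ℝ≥0∞} (hH : Measurable H) (hsymm : ∀ p : ℝ × ℝ, H (p.2, p.1) = H p) :
    ∫⁻ p, H p ∂((volume : Measure ℝ).prod (volume : Measure ℝ)) =
      2 * ∫⁻ p in {p : ℝ × ℝ | p.1 ≤ p.2}, H p ∂((volume : Measure ℝ).prod (volume : Measure ℝ)) := by
  set P2 := (volume : Measure ℝ).prod (volume : Measure ℝ) with hP2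
  have hA : MeasurableSet {p : ℝ × ℝ | p.1 ≤ p.2} :=
    measurableSet_le (measurable_fst : Measurable (Prod.fst : ℝ × ℝ → ℝ)) measurable_snd
  have hlt : MeasurableSet {p : ℝ × ℝ | p.1 < p.2} :=
    measurableSet_lt (measurable_fst : Measurable (Prod.fst : ℝ × ℝ → ℝ)) measurable_snd
  have hgt : MeasurableSet {p : ℝ × ℝ | p.2 < p.1} :=
    measurableSet_lt (measurable_snd : Measurable (Prod.snd : ℝ × ℝ → ℝ)) measurable_fst
  have hAc : {p : ℝ × ℝ | p.1 ≤ p.2}ᶜ = {p : ℝ × ℝ | p.2 < p.1} := by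
    ext p; simp [not_le]
  have hstep1 : ∫⁻ p, H p ∂P2 =
      (∫⁻ p in {p : ℝ × ℝ | p.1 ≤ p.2}, H p ∂P2) + ∫⁻ p in {p : ℝ × ℝ | p.2 < p.1}, H p ∂P2 := by
    rw [← hAc, lintegral_add_compl H hA]
  have hswap : ∫⁻ p in {p : ℝ × ℝ | p.2 < p.1}, H p ∂P2 =
      ∫⁻ p in {p : ℝ × ℝ | p.1 < p.2}, H p ∂P2 := by
    rw [← lintegral_indicator hgt, ← lintegral_indicator hlt]
    have hmp := Measure.measurePreserving_swap (μ := (volume : Measure ℝ)) (ν := (volume : Measure ℝ))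
    have hcomp := hmp.lintegral_comp (f := Set.indicator {p : ℝ × ℝ | p.2 < p.1} H)
      ((hH.indicator hgt))
    rw [← hcomp]
    refine lintegral_congr fun p => ?_
    by_cases hp : p.1 < p.2
    · have h1 : Prod.swap p ∈ {q : ℝ × ℝ | q.2 < q.1} := by simpa using hp
      have h2 : p ∈ {q : ℝ × ℝ | q.1 < q.2} := hp
      rw [Set.indicator_of_mem h1, Set.indicator_of_mem h2]
      exact hsymm p
    · have h1 : Prod.swap p ∉ {q : ℝ × ℝ | q.2 < q.1} := by simpa using hp
      have h2 : p ∉ {q : ℝ × ℝ | q.1 < q.2} := hp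
      rw [Set.indicator_of_notMem h1, Set.indicator_of_notMem h2]
  have hae : {p : ℝ × ℝ | p.1 < p.2} =ᵐ[P2] {p : ℝ × ℝ | p.1 ≤ p.2} := by
    rw [Filter.eventuallyEq_set]
    have hsub : {p : ℝ × ℝ | ¬ (p.1 < p.2 ↔ p.1 ≤ p.2)} ⊆ {p : ℝ × ℝ | p.1 = p.2} := by
      intro p hp
      simp only [Set.mem_setOf_eq] at hp ⊢
      rcases lt_trichotomy p.1 p.2 with h | h | h
      · exact absurd (iff_of_true h h.le) hp
      · exact h
      · exact absurd (iff_of_false (not_lt.mpr h.le) (not_le.mpr h)) hp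
    have : P2 {p : ℝ × ℝ | ¬ (p.1 < p.2 ↔ p.1 ≤ p.2)} = 0 :=
      measure_mono_null hsub myDiag_null
    exact ae_iff.mpr (by simpa using this)
  rw [hstep1, hswap, setLIntegral_congr hae, two_mul]

/-- Let `X_1, …, X_L, Y_1, …, Y_L` be i.i.d. rate-1 exponential random variables,
`S_l = min {X_l, Y_l}`, `l₀ = argmax_l S_l`, `Z₁ = X_{l₀}`, `Z₂ = Y_{l₀}`,
`U = min {Z₁, Z₂}`, `V = max {Z₁, Z₂}`. Then the joint density of `(U, V)` is
`f_{U,V}(u,v) = 2 L e^{-(u+v)} (1 - e^{-2u})^{L-1}` for `0 ≤ u ≤ v` and `0` otherwise. -/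
theorem joint_density_min_max_of_selected_relay_gains
    {Ω : Type*} [MeasurableSpace Ω] (μ : Measure Ω) [IsProbabilityMeasure μ]
    (L : ℕ) (hL : 0 < L) (X Y : Fin L → Ω → ℝ)
    (hX : ∀ l, Measurable (X l)) (hY : ∀ l, Measurable (Y l))
    (hindep : iIndepFun (Sum.elim X Y) μ)
    (hXlaw : ∀ l, μ.map (X l) = expMeasure 1)
    (hYlaw : ∀ l, μ.map (Y l) = expMeasure 1)
    (S : Fin L → Ω → ℝ) (hSdef : ∀ l ω, S l ω = min (X l ω) (Y l ω))
    (l₀ : Ω → Fin L) (hl₀meas : Measurable l₀)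
    (hl₀ : ∀ ω l, S l ω ≤ S (l₀ ω) ω)
    (Z₁ Z₂ : Ω → ℝ) (hZ₁ : ∀ ω, Z₁ ω = X (l₀ ω) ω) (hZ₂ : ∀ ω, Z₂ ω = Y (l₀ ω) ω) :
    μ.map (fun ω => (min (Z₁ ω) (Z₂ ω), max (Z₁ ω) (Z₂ ω))) =
      (volume : Measure (ℝ × ℝ)).withDensity
        (fun p => ENNReal.ofReal
          (if 0 ≤ p.1 ∧ p.1 ≤ p.2 then
            2 * L * Real.exp (-(p.1 + p.2)) * (1 - Real.exp (-2 * p.1)) ^ (L - 1)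
          else 0)) := by
  classical
  haveI : IsProbabilityMeasure (expMeasure 1) := isProbabilityMeasure_expMeasure one_pos
  -- basic objects
  set Dens : ℝ × ℝ → ℝ≥0∞ := fun p => ENNReal.ofReal
      (if 0 ≤ p.1 ∧ p.1 ≤ p.2 then
        2 * L * Real.exp (-(p.1 + p.2)) * (1 - Real.exp (-2 * p.1)) ^ (L - 1)
      else 0) with hDens
  set g : ℝ × ℝ → ℝ × ℝ := fun p => (min p.1 p.2, max p.1 p.2) with hg
  have hgm : Measurable g :=
    (measurable_fst.min measurable_snd).prodMk (measurable_fst.max measurable_snd)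
  set q : ℝ → ℝ≥0∞ := fun t => (ENNReal.ofReal (1 - Real.exp (-(2*t)))) ^ (L-1) with hq
  have hqm : Measurable q := by
    apply Measurable.pow_const
    exact (measurable_const.sub (Real.measurable_exp.comp
      ((measurable_const_mul 2).neg))).ennreal_ofReal
  have hpdfm : Measurable (exponentialPDF 1) := (measurable_exponentialPDFReal 1).ennreal_ofReal
  -- independence structure
  have hmeasElim : ∀ i, Measurable (Sum.elim X Y i) := by
    rintro (i | i)
    · exact hX i
    · exact hY i
  have hpairs : iIndepFun (fun k ω => (X k ω, Y k ω)) μ :=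
    myPairs_iIndep hX hY hindep
  have hSm : ∀ k, Measurable (S k) := by
    intro k
    have hk : S k = fun ω => min (X k ω) (Y k ω) := funext fun ω => hSdef k ω
    rw [hk]; exact (hX k).min (hY k)
  have hSindep : iIndepFun S μ := by
    have h := hpairs.comp (fun _ (p : ℝ × ℝ) => min p.1 p.2)
      (fun _ => measurable_fst.min measurable_snd)
    have hfe : S = fun k => (fun p : ℝ × ℝ => min p.1 p.2) ∘ (fun ω => (X k ω, Y k ω)) :=
      funext fun k => funext fun ω => hSdef k ω
    rw [hfe]; exact h
  have hScdf : ∀ k t, μ (S k ⁻¹' Set.Iio t) = ENNReal.ofReal (1 - Real.exp (-(2*t))) := by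
    intro k t
    have h1 : S k ⁻¹' Set.Iio t = {ω | min (X k ω) (Y k ω) < t} := by
      ext ω; simp [hSdef k ω]
    rw [h1]
    exact myMin_cdf (hX k) (hY k)
      (hindep.indepFun (show (Sum.inl k : Fin L ⊕ Fin L) ≠ Sum.inr k by simp))
      (hXlaw k) (hYlaw k) t
  have hatomS : ∀ k (x : ℝ), μ (S k ⁻¹' {x}) = 0 := by
    intro k x
    have hsub : S k ⁻¹' {x} ⊆ X k ⁻¹' {x} ∪ Y k ⁻¹' {x} := by
      intro ω hω
      have : min (X k ω) (Y k ω) = x := by rw [← hSdef k ω]; exact hω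
      rcases min_cases (X k ω) (Y k ω) with ⟨h, _⟩ | ⟨h, _⟩
      · exact Or.inl (by rw [← this, h]; rfl)
      · exact Or.inr (by rw [← this, h]; rfl)
    refine measure_mono_null hsub ?_
    have hx : μ (X k ⁻¹' {x}) = 0 := by
      rw [← Measure.map_apply (hX k) (measurableSet_singleton x), hXlaw k, myExp_singleton]
    have hy : μ (Y k ⁻¹' {x}) = 0 := by
      rw [← Measure.map_apply (hY k) (measurableSet_singleton x), hYlaw k, myExp_singleton]
    exact le_antisymm ((measure_union_le _ _).trans (by rw [hx, hy, add_zero])) (zero_le)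
  have hTie : ∀ k l : Fin L, k ≠ l → μ {ω | S k ω = S l ω} = 0 := fun k l hkl =>
    myTie_null (hSm k) (hSm l) (hSindep.indepFun hkl) (hatomS l)
  -- measurability of Z's
  have hZmm : ∀ (W : Fin L → Ω → ℝ) (_ : ∀ l, Measurable (W l)),
      Measurable (fun ω => W (l₀ ω) ω) := by
    intro W hW
    have h1 : (fun ω => W (l₀ ω) ω) = fun ω => ∑ l : Fin L, if l₀ ω = l then W l ω else 0 := by
      funext ω
      rw [Finset.sum_ite_eq Finset.univ (l₀ ω) (fun l => W l ω)]
      simp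
    rw [h1]
    exact Finset.measurable_sum _ fun l _ =>
      Measurable.ite (hl₀meas (measurableSet_singleton l)) (hW l) measurable_const
  have hZ1m : Measurable Z₁ := by
    have : Z₁ = fun ω => X (l₀ ω) ω := funext hZ₁
    rw [this]; exact hZmm X hX
  have hZ2m : Measurable Z₂ := by
    have : Z₂ = fun ω => Y (l₀ ω) ω := funext hZ₂
    rw [this]; exact hZmm Y hY
  have hfm : Measurable (fun ω => (min (Z₁ ω) (Z₂ ω), max (Z₁ ω) (Z₂ ω))) :=
    (hZ1m.min hZ2m).prodMk (hZ1m.max hZ2m)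
  -- the sets A l
  set A : Fin L → Set Ω := fun l => {ω | ∀ k, k ≠ l → S k ω < S l ω} with hA
  refine Measure.ext fun C hC => ?_
  rw [Measure.map_apply hfm hC, withDensity_apply _ hC]
  -- F and H
  set F : ℝ × ℝ → ℝ≥0∞ := fun r => Set.indicator (g ⁻¹' C) (fun r => q (min r.1 r.2)) r with hF
  have hFm : Measurable F := (hqm.comp (measurable_fst.min measurable_snd)).indicator (hgm hC)
  set H : ℝ × ℝ → ℝ≥0∞ := fun r => exponentialPDF 1 r.1 * exponentialPDF 1 r.2 * F r with hH
  have hHm : Measurable H :=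
    ((hpdfm.comp measurable_fst).mul (hpdfm.comp measurable_snd)).mul hFm
  -- step 1 : decomposition over the argmax
  have hdecomp : μ ((fun ω => (min (Z₁ ω) (Z₂ ω), max (Z₁ ω) (Z₂ ω))) ⁻¹' C)
      = ∑ l : Fin L, μ ((fun ω => (min (Z₁ ω) (Z₂ ω), max (Z₁ ω) (Z₂ ω))) ⁻¹' C ∩ l₀ ⁻¹' {l}) := by
    have hunion : (fun ω => (min (Z₁ ω) (Z₂ ω), max (Z₁ ω) (Z₂ ω))) ⁻¹' C
        = ⋃ l ∈ Finset.univ, ((fun ω => (min (Z₁ ω) (Z₂ ω), max (Z₁ ω) (Z₂ ω))) ⁻¹' C ∩ l₀ ⁻¹' {l}) := by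
      ext ω
      simp only [Set.mem_iUnion, Set.mem_inter_iff, Set.mem_preimage, Set.mem_singleton_iff,
        Finset.mem_univ, exists_prop, true_and]
      exact ⟨fun h => ⟨l₀ ω, h, rfl⟩, fun ⟨l, h, _⟩ => h⟩
    have hdisj : Set.PairwiseDisjoint ((Finset.univ : Finset (Fin L)) : Set (Fin L))
        (fun l => (fun ω => (min (Z₁ ω) (Z₂ ω), max (Z₁ ω) (Z₂ ω))) ⁻¹' C ∩ l₀ ⁻¹' {l}) := by
      intro a _ b _ hab
      refine Set.disjoint_left.mpr fun ω hωa hωb => hab ?_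
      have h1 : l₀ ω = a := hωa.2
      have h2 : l₀ ω = b := hωb.2
      rw [← h1, ← h2]
    conv_lhs => rw [hunion]
    exact measure_biUnion_finset hdisj fun b _ =>
      (hfm hC).inter (hl₀meas (measurableSet_singleton b))
  -- step 2 : rewrite each summand with the strict-max set A l
  have hstep2 : ∀ l : Fin L,
      μ ((fun ω => (min (Z₁ ω) (Z₂ ω), max (Z₁ ω) (Z₂ ω))) ⁻¹' C ∩ l₀ ⁻¹' {l})
        = μ ((fun ω => g (X l ω, Y l ω)) ⁻¹' C ∩ A l) := by
    intro l
    have hfg : ∀ ω, l₀ ω = l → (min (Z₁ ω) (Z₂ ω), max (Z₁ ω) (Z₂ ω)) = g (X l ω, Y l ω) := by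
      intro ω h
      rw [hZ₁ ω, hZ₂ ω, h]
    have h_eq1 : (fun ω => (min (Z₁ ω) (Z₂ ω), max (Z₁ ω) (Z₂ ω))) ⁻¹' C ∩ l₀ ⁻¹' {l}
        = (fun ω => g (X l ω, Y l ω)) ⁻¹' C ∩ l₀ ⁻¹' {l} := by
      ext ω
      simp only [Set.mem_inter_iff, Set.mem_preimage, Set.mem_singleton_iff]
      constructor
      · rintro ⟨h1, h2⟩; exact ⟨by rwa [← hfg ω h2], h2⟩
      · rintro ⟨h1, h2⟩; exact ⟨by rwa [hfg ω h2], h2⟩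
    rw [h_eq1]
    set N : Set Ω := ⋃ (k : Fin L), ⋃ (_ : k ≠ l), {ω | S k ω = S l ω} with hN
    have hNnull : μ N = 0 :=
      measure_iUnion_null fun k => measure_iUnion_null fun hkl => hTie k l hkl
    have hsub1 : (fun ω => g (X l ω, Y l ω)) ⁻¹' C ∩ l₀ ⁻¹' {l}
        ⊆ ((fun ω => g (X l ω, Y l ω)) ⁻¹' C ∩ A l) ∪ N := by
      rintro ω ⟨h1, h2⟩
      by_cases hωN : ω ∈ N
      · exact Or.inr hωN
      · refine Or.inl ⟨h1, fun k hk => ?_⟩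
        have hle : S k ω ≤ S l ω := by
          have := hl₀ ω k
          rwa [show l₀ ω = l from h2] at this
        rcases hle.lt_or_eq with h | h
        · exact h
        · exact absurd (Set.mem_iUnion.mpr ⟨k, Set.mem_iUnion.mpr ⟨hk, h⟩⟩) hωN
    have hsub2 : A l ⊆ l₀ ⁻¹' {l} := by
      intro ω hω
      by_contra h
      have h1 := hω (l₀ ω) h
      have h2 := hl₀ ω l
      exact absurd h2 (not_le.mpr h1)
    refine le_antisymm ?_ ?_
    · calc μ ((fun ω => g (X l ω, Y l ω)) ⁻¹' C ∩ l₀ ⁻¹' {l})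
          ≤ μ (((fun ω => g (X l ω, Y l ω)) ⁻¹' C ∩ A l) ∪ N) := measure_mono hsub1
        _ ≤ μ ((fun ω => g (X l ω, Y l ω)) ⁻¹' C ∩ A l) + μ N := measure_union_le _ _
        _ = μ ((fun ω => g (X l ω, Y l ω)) ⁻¹' C ∩ A l) := by rw [hNnull, add_zero]
    · exact measure_mono (Set.inter_subset_inter_right _ hsub2)
  -- step 3 : the key computation for each l
  have hkey : ∀ l : Fin L, μ ((fun ω => g (X l ω, Y l ω)) ⁻¹' C ∩ A l)
      = ∫⁻ p, F p ∂((expMeasure 1).prod (expMeasure 1)) := by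
    intro l
    have hXYindep : IndepFun (X l) (Y l) μ :=
      hindep.indepFun (show (Sum.inl l : Fin L ⊕ Fin L) ≠ Sum.inr l by simp)
    have hPm : Measurable fun ω => (X l ω, Y l ω) := (hX l).prodMk (hY l)
    have hlawP : μ.map (fun ω => (X l ω, Y l ω)) = (expMeasure 1).prod (expMeasure 1) := by
      rw [(indepFun_iff_map_prod_eq_prod_map_map (hX l).aemeasurable (hY l).aemeasurable).mp
        hXYindep, hXlaw l, hYlaw l]
    set K : Finset (Fin L) := Finset.univ.erase l with hK
    have hcard : K.card = L - 1 := by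
      rw [hK, Finset.card_erase_of_mem (Finset.mem_univ l), Finset.card_univ, Fintype.card_fin]
    set T : Ω → (K → ℝ) := fun ω k => S k.1 ω with hT
    have hTm : Measurable T := measurable_pi_lambda _ fun k => hSm k.1
    have hPT : IndepFun (fun ω => (X l ω, Y l ω)) T μ := by
      have hbase := hpairs.indepFun_finset {l} K
        (by simp [hK]) (fun k => (hX k).prodMk (hY k))
      have hφm : Measurable fun v : ({l} : Finset (Fin L)) → ℝ × ℝ =>
          v ⟨l, Finset.mem_singleton_self l⟩ := measurable_pi_apply _
      have hψm : Measurable fun (v : K → ℝ × ℝ) (k : K) => min (v k).1 (v k).2 :=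
        measurable_pi_lambda _ fun k =>
          (measurable_fst.comp (measurable_pi_apply k)).min
            (measurable_snd.comp (measurable_pi_apply k))
      have h2 := hbase.comp hφm hψm
      have he1 : ((fun v : ({l} : Finset (Fin L)) → ℝ × ℝ =>
          v ⟨l, Finset.mem_singleton_self l⟩) ∘
          (fun ω (i : ({l} : Finset (Fin L))) => (X i.1 ω, Y i.1 ω))) =
            fun ω => (X l ω, Y l ω) := rfl
      have he2 : ((fun (v : K → ℝ × ℝ) (k : K) => min (v k).1 (v k).2) ∘
          (fun ω (i : K) => (X i.1 ω, Y i.1 ω))) = T := by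
        funext ω k
        simp only [hT, Function.comp_apply, hSdef]
      rwa [he1, he2] at h2
    set D : Set ((ℝ × ℝ) × (K → ℝ)) :=
      {r | g r.1 ∈ C} ∩ ⋂ k : K, {r : (ℝ × ℝ) × (K → ℝ) | r.2 k < min r.1.1 r.1.2} with hD
    have hDm : MeasurableSet D := by
      refine ((hgm.comp measurable_fst) hC).inter (MeasurableSet.iInter fun k => ?_)
      have hm1 : Measurable fun r : (ℝ × ℝ) × (K → ℝ) => r.2 k :=
        (measurable_pi_apply k).comp measurable_snd
      have hm2 : Measurable fun r : (ℝ × ℝ) × (K → ℝ) => min r.1.1 r.1.2 :=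
        (measurable_fst.min measurable_snd).comp measurable_fst
      exact measurableSet_lt hm1 hm2
    have hpre : (fun ω => g (X l ω, Y l ω)) ⁻¹' C ∩ A l
        = (fun ω => ((X l ω, Y l ω), T ω)) ⁻¹' D := by
      ext ω
      simp only [hD, Set.mem_inter_iff, Set.mem_preimage, Set.mem_setOf_eq, Set.mem_iInter,
        hA, hT]
      constructor
      · rintro ⟨h1, h2⟩
        refine ⟨h1, fun k => ?_⟩
        have h3 := h2 k.1 (Finset.ne_of_mem_erase k.2)
        rwa [hSdef l ω] at h3
      · rintro ⟨h1, h2⟩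
        refine ⟨h1, fun k hk => ?_⟩
        have h3 := h2 ⟨k, Finset.mem_erase.mpr ⟨hk, Finset.mem_univ k⟩⟩
        rwa [hSdef l ω]
    rw [hpre, ← Measure.map_apply (hPm.prodMk hTm) hDm,
      (indepFun_iff_map_prod_eq_prod_map_map hPm.aemeasurable hTm.aemeasurable).mp hPT,
      hlawP, Measure.prod_apply hDm]
    refine lintegral_congr fun xy => ?_
    by_cases hgc : g xy ∈ C
    · have hsec : Prod.mk xy ⁻¹' D = ⋂ k : K, {w : K → ℝ | w k < min xy.1 xy.2} := by
        ext w
        simp [hD, hgc]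
      have hsecm : MeasurableSet (⋂ k : K, {w : K → ℝ | w k < min xy.1 xy.2}) :=
        MeasurableSet.iInter fun k => measurableSet_lt (measurable_pi_apply k) measurable_const
      have hwpre : T ⁻¹' (⋂ k : K, {w : K → ℝ | w k < min xy.1 xy.2})
          = ⋂ k ∈ K, S k ⁻¹' Set.Iio (min xy.1 xy.2) := by
        ext ω
        simp only [Set.mem_preimage, Set.mem_setOf_eq, Set.mem_iInter, hT, Set.mem_Iio]
        exact ⟨fun h k hk => h ⟨k, hk⟩, fun h k => h k.1 k.2⟩
      rw [hsec, Measure.map_apply hTm hsecm, hwpre,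
        hSindep.measure_inter_preimage_eq_mul K (fun i _ => measurableSet_Iio)]
      have hprod : ∀ i ∈ K, μ (S i ⁻¹' Set.Iio (min xy.1 xy.2))
          = ENNReal.ofReal (1 - Real.exp (-(2 * min xy.1 xy.2))) := fun i _ => hScdf i _
      rw [Finset.prod_congr rfl hprod, Finset.prod_const, hcard]
      have hgc' : xy ∈ g ⁻¹' C := hgc
      simp only [hF]
      rw [Set.indicator_of_mem hgc']
    · have hsec : Prod.mk xy ⁻¹' D = ∅ := by
        ext w; simp [hD, hgc]
      have hgc' : xy ∉ g ⁻¹' C := hgc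
      rw [hsec, measure_empty]
      simp only [hF]
      rw [Set.indicator_of_notMem hgc']
  -- step 4 : from the exponential product measure to Lebesgue
  have hstep4 : ∫⁻ p, F p ∂((expMeasure 1).prod (expMeasure 1))
      = ∫⁻ p, H p ∂((volume : Measure ℝ).prod (volume : Measure ℝ)) := by
    rw [lintegral_prod _ hFm.aemeasurable, lintegral_prod _ hHm.aemeasurable]
    have hinner : ∀ x : ℝ, ∫⁻ y, F (x, y) ∂(expMeasure 1)
        = ∫⁻ y, exponentialPDF 1 y * F (x, y) ∂(volume : Measure ℝ) := by
      intro x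
      have hFx : Measurable fun y => F (x, y) := hFm.comp measurable_prodMk_left
      rw [myExp_eq_withDensity, lintegral_withDensity_eq_lintegral_mul _ hpdfm hFx]
      rfl
    calc ∫⁻ x, ∫⁻ y, F (x, y) ∂(expMeasure 1) ∂(expMeasure 1)
        = ∫⁻ x, ∫⁻ y, exponentialPDF 1 y * F (x, y) ∂(volume : Measure ℝ) ∂(expMeasure 1) :=
          lintegral_congr hinner
      _ = ∫⁻ x, exponentialPDF 1 x * ∫⁻ y, exponentialPDF 1 y * F (x, y)
            ∂(volume : Measure ℝ) ∂(volume : Measure ℝ) := by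
          have houter : Measurable fun x => ∫⁻ y, exponentialPDF 1 y * F (x, y)
              ∂(volume : Measure ℝ) :=
            ((hpdfm.comp measurable_snd).mul hFm).lintegral_prod_right'
          rw [myExp_eq_withDensity, lintegral_withDensity_eq_lintegral_mul _ hpdfm houter]
          rfl
      _ = ∫⁻ x, ∫⁻ y, H (x, y) ∂(volume : Measure ℝ) ∂(volume : Measure ℝ) := by
          refine lintegral_congr fun x => ?_
          have hFx : Measurable fun y => exponentialPDF 1 y * F (x, y) :=
            hpdfm.mul (hFm.comp measurable_prodMk_left)
          rw [← lintegral_const_mul _ hFx]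
          refine lintegral_congr fun y => ?_
          simp only [hH]
          ring
  -- symmetry of H
  have hHsymm : ∀ p : ℝ × ℝ, H (p.2, p.1) = H p := by
    intro p
    have hgs : g (p.2, p.1) = g p := Prod.ext (min_comm _ _) (max_comm _ _)
    have hFs : F (p.2, p.1) = F p := by
      simp only [hF, Set.indicator_apply, Set.mem_preimage, hgs]
      rw [show min (p.2, p.1).1 (p.2, p.1).2 = min p.1 p.2 from min_comm _ _]
    simp only [hH, hFs]
    ring
  -- pointwise identity
  have hpoint : ∀ p : ℝ × ℝ, Set.indicator C Dens p
      = (2 * L : ℝ≥0∞) * Set.indicator {p : ℝ × ℝ | p.1 ≤ p.2} H p := by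
    intro p
    by_cases h12 : p.1 ≤ p.2
    · have hgp : g p = p := Prod.ext (min_eq_left h12) (max_eq_right h12)
      have hmemA : p ∈ {q : ℝ × ℝ | q.1 ≤ q.2} := h12
      rw [Set.indicator_of_mem hmemA]
      by_cases hpc : p ∈ C
      · rw [Set.indicator_of_mem hpc]
        have hFp : F p = q p.1 := by
          have hmem : p ∈ g ⁻¹' C := by rw [Set.mem_preimage, hgp]; exact hpc
          simp only [hF]
          rw [Set.indicator_of_mem hmem, min_eq_left h12]
        by_cases h0 : 0 ≤ p.1
        · have h0' : 0 ≤ p.2 := le_trans h0 h12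
          have hexple : Real.exp (-(2 * p.1)) ≤ 1 := Real.exp_le_one_iff.mpr (by linarith)
          have hcond : 0 ≤ p.1 ∧ p.1 ≤ p.2 := ⟨h0, h12⟩
          simp only [hDens, hH, hFp, hq, if_pos hcond]
          rw [exponentialPDF_of_nonneg h0, exponentialPDF_of_nonneg h0']
          rw [show (-2 * p.1) = -(2 * p.1) by ring]
          rw [ENNReal.ofReal_mul (by positivity), ENNReal.ofReal_mul (by positivity),
            ENNReal.ofReal_pow (by linarith : (0:ℝ) ≤ 1 - Real.exp (-(2 * p.1))),
            ENNReal.ofReal_mul (by norm_num : (0:ℝ) ≤ 2), ENNReal.ofReal_natCast,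
            ENNReal.ofReal_ofNat,
            show Real.exp (-(p.1 + p.2)) = (1 * Real.exp (-(1 * p.1))) * (1 * Real.exp (-(1 * p.2)))
              from by rw [one_mul, one_mul, one_mul, one_mul, ← Real.exp_add]; ring_nf,
            ENNReal.ofReal_mul (by positivity)]
          ring
        · push_neg at h0
          simp only [hDens, hH, if_neg (fun h : 0 ≤ p.1 ∧ p.1 ≤ p.2 => absurd h.1 (not_le.mpr h0))]
          rw [exponentialPDF_of_neg h0]
          simp
      · rw [Set.indicator_of_notMem hpc]
        have hFp : F p = 0 := by
          have hmem : p ∉ g ⁻¹' C := by rw [Set.mem_preimage, hgp]; exact hpc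
          simp only [hF]
          rw [Set.indicator_of_notMem hmem]
        simp only [hH, hFp]
        simp
    · have hmemA : p ∉ {q : ℝ × ℝ | q.1 ≤ q.2} := h12
      rw [Set.indicator_of_notMem hmemA]
      by_cases hpc : p ∈ C
      · rw [Set.indicator_of_mem hpc]
        simp only [hDens, if_neg (fun h : 0 ≤ p.1 ∧ p.1 ≤ p.2 => absurd h.2 h12)]
        simp
      · rw [Set.indicator_of_notMem hpc]
        simp
  -- put everything together
  calc μ ((fun ω => (min (Z₁ ω) (Z₂ ω), max (Z₁ ω) (Z₂ ω))) ⁻¹' C)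
      = ∑ l : Fin L, μ ((fun ω => (min (Z₁ ω) (Z₂ ω), max (Z₁ ω) (Z₂ ω))) ⁻¹' C ∩ l₀ ⁻¹' {l}) :=
        hdecomp
    _ = ∑ _l : Fin L, ∫⁻ p, F p ∂((expMeasure 1).prod (expMeasure 1)) := by
        refine Finset.sum_congr rfl fun l _ => ?_
        rw [hstep2 l, hkey l]
    _ = (L : ℝ≥0∞) * ∫⁻ p, F p ∂((expMeasure 1).prod (expMeasure 1)) := by
        rw [Finset.sum_const, Finset.card_univ, Fintype.card_fin, nsmul_eq_mul]
    _ = (L : ℝ≥0∞) * (2 * ∫⁻ p in {p : ℝ × ℝ | p.1 ≤ p.2}, H p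
          ∂((volume : Measure ℝ).prod (volume : Measure ℝ))) := by
        rw [hstep4, mySymm hHm hHsymm]
    _ = ∫⁻ p in C, Dens p ∂(volume : Measure (ℝ × ℝ)) := by
        have hAm : MeasurableSet {p : ℝ × ℝ | p.1 ≤ p.2} :=
          measurableSet_le (measurable_fst : Measurable (Prod.fst : ℝ × ℝ → ℝ)) measurable_snd
        rw [← lintegral_indicator hC, Measure.volume_eq_prod]
        rw [show (Set.indicator C Dens : ℝ × ℝ → ℝ≥0∞)
            = fun p => (2 * L : ℝ≥0∞) * Set.indicator {p : ℝ × ℝ | p.1 ≤ p.2} H p from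
          funext hpoint]
        rw [lintegral_const_mul _ (hHm.indicator hAm), lintegral_indicator hAm]
        ring
end

section
/- The function g(z₁, z₂) = L e^{-(z₁+z₂)}(1 - e^{-2 min{z₁,z₂}})^{L-1} on [0,∞)² (extended by 0 elsewhere) is a probability density function: it is nonnegative and integrates to 1 over ℝ². -/
open MeasureTheory ProbabilityTheory Real Filter Topology

/-- The density function under consideration. -/
noncomputable def fdens (L : ℕ) : ℝ × ℝ → ℝ := fun z =>
  if 0 ≤ z.1 ∧ 0 ≤ z.2 then
    (L : ℝ) * Real.exp (-(z.1 + z.2)) * (1 - Real.exp (-2 * min z.1 z.2)) ^ (L - 1)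
  else 0

lemma fdens_nonneg (L : ℕ) (z : ℝ × ℝ) : 0 ≤ fdens L z := by
  unfold fdens
  split_ifs with h
  · obtain ⟨h1, h2⟩ := h
    have hm : (0:ℝ) ≤ min z.1 z.2 := le_min h1 h2
    have he1 : Real.exp (-2 * min z.1 z.2) ≤ 1 := by
      rw [Real.exp_le_one_iff]; nlinarith
    have hp0 : (0:ℝ) ≤ 1 - Real.exp (-2 * min z.1 z.2) := by linarith
    positivity
  · exact le_refl 0

/-- The key 1D improper integral. -/
lemma key1 (L : ℕ) (hL : 0 < L) :
    ∫ x in Set.Ioi (0:ℝ), (L:ℝ) * Real.exp (-2*x) * (1 - Real.exp (-2*x))^(L-1) = 1/2 := by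
  have hderiv : ∀ x ∈ Set.Ici (0:ℝ),
      HasDerivAt (fun x : ℝ => (1 - Real.exp (-2*x))^L / 2)
        ((L:ℝ) * Real.exp (-2*x) * (1 - Real.exp (-2*x))^(L-1)) x := by
    intro x _
    have h1 : HasDerivAt (fun x : ℝ => -2*x) (-2) x := by
      simpa using (hasDerivAt_id x).const_mul (-2)
    have h2 : HasDerivAt (fun x : ℝ => 1 - Real.exp (-2*x))
        (-(Real.exp (-2*x) * (-2))) x := (h1.exp).const_sub 1
    have h3 : HasDerivAt (fun x : ℝ => (1 - Real.exp (-2*x))^L / 2) _ x := (h2.pow L).div_const 2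
    convert h3 using 1
    have : (L:ℝ) ≠ 0 := Nat.cast_ne_zero.2 hL.ne'
    ring
  have f'int : IntegrableOn
      (fun x => (L:ℝ) * Real.exp (-2*x) * (1 - Real.exp (-2*x))^(L-1)) (Set.Ioi (0:ℝ)) := by
    have hg : IntegrableOn (fun x : ℝ => (L:ℝ) * Real.exp (-2*x)) (Set.Ioi (0:ℝ)) :=
      (exp_neg_integrableOn_Ioi 0 (by norm_num : (0:ℝ) < 2)).const_mul _
    refine hg.integrable.mono' ?_ ?_
    · exact (Continuous.aestronglyMeasurable (by continuity))
    · refine (ae_restrict_iff' measurableSet_Ioi).2 (ae_of_all _ fun x hx => ?_)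
      have hx0 : (0:ℝ) ≤ x := le_of_lt hx
      have he1 : Real.exp (-2*x) ≤ 1 := by
        rw [Real.exp_le_one_iff]; nlinarith
      have hp0 : (0:ℝ) ≤ 1 - Real.exp (-2*x) := by linarith
      have hp1 : (1 - Real.exp (-2*x))^(L-1) ≤ 1 :=
        pow_le_one₀ hp0 (by have := Real.exp_pos (-2*x); linarith)
      have hnn : (0:ℝ) ≤ (L:ℝ) * Real.exp (-2*x) * (1 - Real.exp (-2*x))^(L-1) := by
        positivity
      rw [Real.norm_of_nonneg hnn]
      have : (0:ℝ) ≤ (L:ℝ) * Real.exp (-2*x) := by positivity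
      nlinarith
  have htend : Tendsto (fun x : ℝ => (1 - Real.exp (-2*x))^L / 2) atTop (𝓝 (1/2)) := by
    have h0 : Tendsto (fun x : ℝ => Real.exp (-2*x)) atTop (𝓝 0) := by
      have : Tendsto (fun x : ℝ => -2*x) atTop atBot :=
        tendsto_id.const_mul_atTop_of_neg (by norm_num)
      exact Real.tendsto_exp_atBot.comp this
    have := ((((tendsto_const_nhds (x := (1:ℝ))).sub h0).pow L).div_const 2)
    simpa using this
  have := integral_Ioi_of_hasDerivAt_of_tendsto'
      (f := fun x : ℝ => (1 - Real.exp (-2*x))^L / 2) hderiv f'int htend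
  rw [this]
  simp [Real.exp_zero, zero_pow hL.ne']

/-- The outer 1D integral. -/
lemma outer1 (L : ℕ) (hL : 0 < L) :
    ∫ x : ℝ, (if 0 ≤ x then (L:ℝ) * Real.exp (-2*x) * (1 - Real.exp (-2*x))^(L-1) else 0)
      = 1/2 := by
  have heq : (fun x : ℝ =>
      if 0 ≤ x then (L:ℝ) * Real.exp (-2*x) * (1 - Real.exp (-2*x))^(L-1) else 0)
      = Set.indicator (Set.Ici 0)
        (fun x => (L:ℝ) * Real.exp (-2*x) * (1 - Real.exp (-2*x))^(L-1)) := by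
    funext x
    simp [Set.indicator_apply]
  rw [heq, MeasureTheory.integral_indicator measurableSet_Ici,
    MeasureTheory.integral_Ici_eq_integral_Ioi, key1 L hL]

/-- A simple 1D exponential integral. -/
lemma inner1 (c C : ℝ) : ∫ y in Set.Ioi c, C * Real.exp (-y) = C * Real.exp (-c) := by
  rw [MeasureTheory.integral_const_mul, integral_exp_neg_Ioi]

lemma meas1 (L : ℕ) : Measurable (fdens L) := by
  have hS : MeasurableSet {z : ℝ × ℝ | 0 ≤ z.1 ∧ 0 ≤ z.2} :=
    (measurableSet_Ici.preimage measurable_fst).inter (measurableSet_Ici.preimage measurable_snd)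
  exact Measurable.ite hS (by fun_prop) measurable_const

lemma int1 (L : ℕ) : Integrable (fdens L) := by
  have h1 : IntegrableOn (fun x : ℝ => (L:ℝ) * Real.exp (-x)) (Set.Ici 0) := by
    rw [integrableOn_Ici_iff_integrableOn_Ioi]
    exact (by simpa using (exp_neg_integrableOn_Ioi 0 (by norm_num : (0:ℝ) < 1)).const_mul (L:ℝ) :
      Integrable (fun x : ℝ => (L:ℝ) * Real.exp (-x)) (volume.restrict (Set.Ioi 0)))
  have h2 : IntegrableOn (fun x : ℝ => Real.exp (-x)) (Set.Ici 0) := by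
    rw [integrableOn_Ici_iff_integrableOn_Ioi]
    simpa using exp_neg_integrableOn_Ioi 0 (by norm_num : (0:ℝ) < 1)
  have hD : Integrable (fun z : ℝ × ℝ =>
      (Set.Ici (0:ℝ)).indicator (fun x => (L:ℝ) * Real.exp (-x)) z.1 *
      (Set.Ici (0:ℝ)).indicator (fun y => Real.exp (-y)) z.2) :=
    Integrable.mul_prod (h1.integrable_indicator measurableSet_Ici)
      (h2.integrable_indicator measurableSet_Ici)
  refine hD.mono' (meas1 L).aestronglyMeasurable (ae_of_all _ fun z => ?_)
  unfold fdens
  by_cases h : 0 ≤ z.1 ∧ 0 ≤ z.2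
  · obtain ⟨h1', h2'⟩ := h
    have hm : (0:ℝ) ≤ min z.1 z.2 := le_min h1' h2'
    have he1 : Real.exp (-2 * min z.1 z.2) ≤ 1 := by
      rw [Real.exp_le_one_iff]; nlinarith
    have hp0 : (0:ℝ) ≤ 1 - Real.exp (-2 * min z.1 z.2) := by linarith
    have hp1 : (1 - Real.exp (-2 * min z.1 z.2))^(L-1) ≤ 1 :=
      pow_le_one₀ hp0 (by have := Real.exp_pos (-2 * min z.1 z.2); linarith)
    rw [if_pos ⟨h1', h2'⟩, Set.indicator_of_mem (show z.1 ∈ Set.Ici (0:ℝ) from h1'),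
      Set.indicator_of_mem (show z.2 ∈ Set.Ici (0:ℝ) from h2'),
      Real.norm_of_nonneg (by positivity)]
    have he : Real.exp (-(z.1 + z.2)) = Real.exp (-z.1) * Real.exp (-z.2) := by
      rw [← Real.exp_add]; ring_nf
    rw [he]
    calc (L:ℝ) * (Real.exp (-z.1) * Real.exp (-z.2)) * (1 - Real.exp (-2 * min z.1 z.2))^(L-1)
        ≤ (L:ℝ) * (Real.exp (-z.1) * Real.exp (-z.2)) * 1 :=
          mul_le_mul_of_nonneg_left hp1 (by positivity)
      _ = (L:ℝ) * Real.exp (-z.1) * Real.exp (-z.2) := by ring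
  · rw [if_neg h, norm_zero]
    apply mul_nonneg
    · exact Set.indicator_nonneg (fun x _ => by positivity) _
    · exact Set.indicator_nonneg (fun x _ => (Real.exp_pos _).le) _

/-- The region `{z : z.1 ≤ z.2}`. -/
def Aset : Set (ℝ × ℝ) := {z | z.1 ≤ z.2}

lemma Aset_meas : MeasurableSet Aset := measurableSet_le measurable_fst measurable_snd

lemma half1 (L : ℕ) (hL : 0 < L) : ∫ z : ℝ × ℝ, Aset.indicator (fdens L) z = 1/2 := by
  rw [MeasureTheory.Measure.volume_eq_prod, MeasureTheory.integral_prod _ (by rw [← MeasureTheory.Measure.volume_eq_prod]; exact (int1 L).indicator Aset_meas)]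
  have hpt : ∀ x : ℝ, (∫ y : ℝ, Aset.indicator (fdens L) (x, y))
      = (if 0 ≤ x then (L:ℝ) * Real.exp (-2*x) * (1 - Real.exp (-2*x))^(L-1) else 0) := by
    intro x
    by_cases hx : 0 ≤ x
    · have hfun : (fun y : ℝ => Aset.indicator (fdens L) (x, y))
          = Set.indicator (Set.Ici x)
            (fun y => ((L:ℝ) * Real.exp (-x) * (1 - Real.exp (-2*x))^(L-1)) * Real.exp (-y)) := by
        funext y
        by_cases hxy : x ≤ y
        · have hy : 0 ≤ y := le_trans hx hxy
          rw [Set.indicator_of_mem (show (x, y) ∈ Aset from hxy),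
            Set.indicator_of_mem (show y ∈ Set.Ici x from hxy)]
          show (if 0 ≤ x ∧ 0 ≤ y then
            (L : ℝ) * Real.exp (-(x + y)) * (1 - Real.exp (-2 * min x y)) ^ (L - 1) else 0) = _
          rw [if_pos ⟨hx, hy⟩, min_eq_left hxy,
            show Real.exp (-(x + y)) = Real.exp (-x) * Real.exp (-y) by
              rw [← Real.exp_add]; ring_nf]
          ring
        · rw [Set.indicator_of_notMem (show (x, y) ∉ Aset from hxy),
            Set.indicator_of_notMem (show y ∉ Set.Ici x from hxy)]
      rw [hfun, MeasureTheory.integral_indicator measurableSet_Ici,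
        MeasureTheory.integral_Ici_eq_integral_Ioi, inner1, if_pos hx,
        show Real.exp (-2*x) = Real.exp (-x) * Real.exp (-x) by rw [← Real.exp_add]; ring_nf]
      ring
    · have hfun : (fun y : ℝ => Aset.indicator (fdens L) (x, y)) = fun _ => 0 := by
        funext y
        by_cases hxy : (x, y) ∈ Aset
        · rw [Set.indicator_of_mem hxy]
          show (if 0 ≤ x ∧ 0 ≤ y then
            (L : ℝ) * Real.exp (-(x + y)) * (1 - Real.exp (-2 * min x y)) ^ (L - 1) else 0) = 0
          rw [if_neg (fun h => hx h.1)]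
        · rw [Set.indicator_of_notMem hxy]
      rw [hfun, MeasureTheory.integral_zero, if_neg hx]
  calc (∫ x : ℝ, ∫ y : ℝ, Aset.indicator (fdens L) (x, y))
      = ∫ x : ℝ, (if 0 ≤ x then (L:ℝ) * Real.exp (-2*x) * (1 - Real.exp (-2*x))^(L-1) else 0) :=
        MeasureTheory.integral_congr_ae (Filter.Eventually.of_forall hpt)
    _ = 1/2 := outer1 L hL

lemma half2 (L : ℕ) (hL : 0 < L) : ∫ z : ℝ × ℝ, Asetᶜ.indicator (fdens L) z = 1/2 := by
  rw [MeasureTheory.Measure.volume_eq_prod, MeasureTheory.integral_prod_symm _ (by rw [← MeasureTheory.Measure.volume_eq_prod]; exact (int1 L).indicator Aset_meas.compl)]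
  have hpt : ∀ y : ℝ, (∫ x : ℝ, Asetᶜ.indicator (fdens L) (x, y))
      = (if 0 ≤ y then (L:ℝ) * Real.exp (-2*y) * (1 - Real.exp (-2*y))^(L-1) else 0) := by
    intro y
    by_cases hy : 0 ≤ y
    · have hfun : (fun x : ℝ => Asetᶜ.indicator (fdens L) (x, y))
          = Set.indicator (Set.Ioi y)
            (fun x => ((L:ℝ) * Real.exp (-y) * (1 - Real.exp (-2*y))^(L-1)) * Real.exp (-x)) := by
        funext x
        by_cases hxy : y < x
        · have hx : 0 ≤ x := le_trans hy hxy.le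
          rw [Set.indicator_of_mem (show (x, y) ∈ Asetᶜ from not_le.2 hxy),
            Set.indicator_of_mem (show x ∈ Set.Ioi y from hxy)]
          show (if 0 ≤ x ∧ 0 ≤ y then
            (L : ℝ) * Real.exp (-(x + y)) * (1 - Real.exp (-2 * min x y)) ^ (L - 1) else 0) = _
          rw [if_pos ⟨hx, hy⟩, min_eq_right hxy.le,
            show Real.exp (-(x + y)) = Real.exp (-y) * Real.exp (-x) by
              rw [← Real.exp_add]; ring_nf]
          ring
        · rw [Set.indicator_of_notMem
              (show (x, y) ∉ Asetᶜ from fun hc => hc (not_lt.1 hxy)),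
            Set.indicator_of_notMem (show x ∉ Set.Ioi y from hxy)]
      rw [hfun, MeasureTheory.integral_indicator measurableSet_Ioi, inner1, if_pos hy,
        show Real.exp (-2*y) = Real.exp (-y) * Real.exp (-y) by rw [← Real.exp_add]; ring_nf]
      ring
    · have hfun : (fun x : ℝ => Asetᶜ.indicator (fdens L) (x, y)) = fun _ => 0 := by
        funext x
        by_cases hxy : (x, y) ∈ Asetᶜ
        · rw [Set.indicator_of_mem hxy]
          show (if 0 ≤ x ∧ 0 ≤ y then
            (L : ℝ) * Real.exp (-(x + y)) * (1 - Real.exp (-2 * min x y)) ^ (L - 1) else 0) = 0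
          rw [if_neg (fun h => hy h.2)]
        · rw [Set.indicator_of_notMem hxy]
      rw [hfun, MeasureTheory.integral_zero, if_neg hy]
  calc (∫ y : ℝ, ∫ x : ℝ, Asetᶜ.indicator (fdens L) (x, y))
      = ∫ y : ℝ, (if 0 ≤ y then (L:ℝ) * Real.exp (-2*y) * (1 - Real.exp (-2*y))^(L-1) else 0) :=
        MeasureTheory.integral_congr_ae (Filter.Eventually.of_forall hpt)
    _ = 1/2 := outer1 L hL

/-- The function `g(z₁, z₂) = L e^{-(z₁+z₂)} (1 - e^{-2 min{z₁,z₂}})^{L-1}` on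
`[0,∞)²` (extended by `0` elsewhere) is a probability density: it is nonnegative and
integrates to `1` over `ℝ²`. -/
theorem selected_relay_gains_density_is_pdf (L : ℕ) (hL : 0 < L) :
    (∀ z : ℝ × ℝ,
      0 ≤ (if 0 ≤ z.1 ∧ 0 ≤ z.2 then
        (L : ℝ) * Real.exp (-(z.1 + z.2)) * (1 - Real.exp (-2 * min z.1 z.2)) ^ (L - 1)
      else 0)) ∧
    (∫ z : ℝ × ℝ,
      (if 0 ≤ z.1 ∧ 0 ≤ z.2 then
        (L : ℝ) * Real.exp (-(z.1 + z.2)) * (1 - Real.exp (-2 * min z.1 z.2)) ^ (L - 1)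
      else 0)) = 1 := by
  constructor
  · exact fun z => fdens_nonneg L z
  · have hsplit : (fun z : ℝ × ℝ => fdens L z)
        = fun z => Aset.indicator (fdens L) z + Asetᶜ.indicator (fdens L) z := by
      funext z
      rw [← Pi.add_apply, Set.indicator_self_add_compl]
    calc (∫ z : ℝ × ℝ, fdens L z)
        = ∫ z : ℝ × ℝ, (Aset.indicator (fdens L) z + Asetᶜ.indicator (fdens L) z) := by
          rw [← hsplit]
      _ = (∫ z : ℝ × ℝ, Aset.indicator (fdens L) z)
            + ∫ z : ℝ × ℝ, Asetᶜ.indicator (fdens L) z :=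
          MeasureTheory.integral_add ((int1 L).indicator Aset_meas)
            ((int1 L).indicator Aset_meas.compl)
      _ = 1 := by rw [half1 L hL, half2 L hL]; norm_num
end
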